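/- Let ℰ₁ = {p ∈ ℝ³ : (p − c₁)ᵀ·M₁·(p − c₁) ≤ 1} and ℰ₂ = {p ∈ ℝ³ : (p − c₂)ᵀ·M₂·(p − c₂) ≤ 1} be solid ellipsoids in ℝ³ with M₁, M₂ symmetric positive definite. Let π : ℝ³ → ℝ² be the orthogonal projection onto one of the coordinate planes (x-y, x-z, or y-z), and suppose π(ℰ₁) = {q : (q − c₁′)ᵀ·M₁′·(q − c₁′) ≤ 1} and π(ℰ₂) = {q : (q − c₂′)ᵀ·M₂′·(q − c₂′) ≤ 1} with M₁′, M₂′ symmetric positive definite 2×2 matrices, with homogeneous matrices A₁′, A₂′ ∈ ℝ^{3×3}. If the characteristic polynomial f(λ) = det(λ·A₁′ − A₂′) has two distinct negative real roots, then ℰ₁ ∩ ℰ₂ = ∅, i.e., the three-dimensional ellipsoids are disjoint. -/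

import Mathlib

/-- The solid ellipsoid `{p ∈ ℝ³ : (p − c)ᵀ·M·(p − c) ≤ 1}`. -/
def solidEllipsoid (M : Matrix (Fin 3) (Fin 3) ℝ) (c : Fin 3 → ℝ) :
    Set (Fin 3 → ℝ) :=
  {p | dotProduct (p - c) (M.mulVec (p - c)) ≤ 1}

/-- The solid planar ellipse `{q ∈ ℝ² : (q − c)ᵀ·M·(q − c) ≤ 1}`. -/
def solidEllipse (M : Matrix (Fin 2) (Fin 2) ℝ) (c : Fin 2 → ℝ) :
    Set (Fin 2 → ℝ) :=
  {q | dotProduct (q - c) (M.mulVec (q - c)) ≤ 1}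

/-- The homogeneous matrix of the solid planar ellipse
`{q ∈ ℝ² : (q − c)ᵀ·M·(q − c) ≤ 1}`: in block form `[[M, −M·c], [−cᵀ·M, cᵀ·M·c − 1]]`. -/
def ellipseHomMat (M : Matrix (Fin 2) (Fin 2) ℝ) (c : Fin 2 → ℝ) :
    Matrix (Fin 3) (Fin 3) ℝ :=
  ![![M 0 0, M 0 1, -(M.mulVec c) 0],
    ![M 1 0, M 1 1, -(M.mulVec c) 1],
    ![-(Matrix.vecMul c M) 0, -(Matrix.vecMul c M) 1,
      dotProduct c (M.mulVec c) - 1]]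

/-- Determinant nonnegativity for a symmetric 3×3 quadratic form whose leading 2×2 block
is negative definite and which is nonnegative at some affine point. -/
lemma det3_nonneg (α β γ v0 v1 δ u0 u1 : ℝ) (hα : α < 0)
    (hd : 0 < α*γ - β^2)
    (hQ : 0 ≤ α*u0^2 + 2*β*u0*u1 + γ*u1^2 + 2*v0*u0 + 2*v1*u1 + δ) :
    0 ≤ α*(γ*δ - v1^2) - β*(β*δ - v1*v0) + v0*(β*v1 - γ*v0) := by
  have h2 : γ*(α*u0+β*u1+v0)^2 - 2*β*(α*u0+β*u1+v0)*(β*u0+γ*u1+v1)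
      + α*(β*u0+γ*u1+v1)^2 ≤ 0 := by
    nlinarith [sq_nonneg (β*(α*u0+β*u1+v0) - α*(β*u0+γ*u1+v1)),
      mul_nonneg hd.le (sq_nonneg (α*u0+β*u1+v0))]
  nlinarith [mul_nonneg hd.le hQ, h2]

set_option maxHeartbeats 2000000 in
lemma key_nonneg (a11 a12 a22 p1 p2 b11 b12 b22 q1 q2 x y t : ℝ)
    (ht : t < 0) (ha11 : 0 < a11) (hdA : 0 < a11*a22 - a12*a12)
    (hb11 : 0 < b11) (hdB : 0 < b11*b22 - b12*b12)
    (he1 : a11*(x-p1)^2 + 2*a12*(x-p1)*(y-p2) + a22*(y-p2)^2 ≤ 1)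
    (he2 : b11*(x-q1)^2 + 2*b12*(x-q1)*(y-q2) + b22*(y-q2)^2 ≤ 1) :
    0 ≤ (t*a11-b11)*(t*a22-b22)*(t*(p1*(a11*p1+a12*p2)+p2*(a12*p1+a22*p2)-1)-(q1*(b11*q1+b12*q2)+q2*(b12*q1+b22*q2)-1)) + 2*(t*a12-b12)*(t*(a11*p1+a12*p2)-(b11*q1+b12*q2))*(t*(a12*p1+a22*p2)-(b12*q1+b22*q2)) - (t*a22-b22)*(t*(a11*p1+a12*p2)-(b11*q1+b12*q2))^2 - (t*a11-b11)*(t*(a12*p1+a22*p2)-(b12*q1+b22*q2))^2 - (t*(p1*(a11*p1+a12*p2)+p2*(a12*p1+a22*p2)-1)-(q1*(b11*q1+b12*q2)+q2*(b12*q1+b22*q2)-1))*(t*a12-b12)^2 := by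
  have hα : t*a11 - b11 < 0 := by nlinarith
  have hm : 0 < a11*b22 + a22*b11 - 2*a12*b12 := by
    nlinarith [sq_nonneg (a11*b12 - a12*b11), mul_pos ha11 hb11,
      mul_pos (mul_pos ha11 ha11) hdB, mul_pos (mul_pos hb11 hb11) hdA]
  have hd : 0 < (t*a11-b11)*(t*a22-b22) - (t*a12-b12)^2 := by
    nlinarith [mul_pos (mul_pos (neg_pos.2 ht) (neg_pos.2 ht)) hdA,
      mul_pos (neg_pos.2 ht) hm, hdB]
  have hQ : 0 ≤ (t*a11-b11)*x^2 + 2*(t*a12-b12)*x*y + (t*a22-b22)*y^2 + 2*(-(t*(a11*p1+a12*p2)-(b11*q1+b12*q2)))*x + 2*(-(t*(a12*p1+a22*p2)-(b12*q1+b22*q2)))*y + (t*(p1*(a11*p1+a12*p2)+p2*(a12*p1+a22*p2)-1)-(q1*(b11*q1+b12*q2)+q2*(b12*q1+b22*q2)-1)) := by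
    nlinarith [mul_nonneg (neg_nonneg.2 ht.le) (sub_nonneg.2 he1), sub_nonneg.2 he2]
  have h := det3_nonneg (t*a11-b11) (t*a12-b12) (t*a22-b22) (-(t*(a11*p1+a12*p2)-(b11*q1+b12*q2))) (-(t*(a12*p1+a22*p2)-(b12*q1+b22*q2))) (t*(p1*(a11*p1+a12*p2)+p2*(a12*p1+a22*p2)-1)-(q1*(b11*q1+b12*q2)+q2*(b12*q1+b22*q2)-1)) x y hα hd hQ
  nlinarith [h]

lemma cubic_contra_aux (f : ℝ → ℝ) (a b c d l1 l2 : ℝ)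
    (hf : ∀ t, f t = a*t^3 + b*t^2 + c*t + d)
    (ha : a ≠ 0) (h2 : l2 < 0) (hlt : l1 < l2)
    (hnn : ∀ t, t < 0 → 0 ≤ f t) (hr1 : f l1 = 0) (hr2 : f l2 = 0) : False := by
  rw [hf] at hr1 hr2
  have hne : l1 - l2 ≠ 0 := sub_ne_zero.2 (ne_of_lt hlt)
  have hc : c = -(a*(l1^2+l1*l2+l2^2)) - b*(l1+l2) := by
    have h0 : (l1-l2)*(a*(l1^2+l1*l2+l2^2)+b*(l1+l2)+c) = 0 := by linear_combination hr1 - hr2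
    rcases mul_eq_zero.1 h0 with h | h
    · exact absurd h hne
    · linarith
  have hdd : d = (b + a*(l1+l2))*(l1*l2) := by linear_combination hr1 - l1 * hc
  have hfact : ∀ t, f t = (t - l1)*(t - l2)*(a*t + (b + a*(l1+l2))) := by
    intro t; rw [hf, hc, hdd]; ring
  have h1 : l1 < 0 := lt_trans hlt h2
  have hm1 : a*((l1+l2)/2) + (b + a*(l1+l2)) ≤ 0 := by
    have h := hnn ((l1+l2)/2) (by linarith)
    rw [hfact] at h
    by_contra hp
    push_neg at hp
    nlinarith [h, mul_pos (show (0:ℝ) < (l1+l2)/2 - l1 by linarith) hp,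
      (show (l1+l2)/2 - l2 < 0 by linarith)]
  have hm2 : 0 ≤ a*(l2/2) + (b + a*(l1+l2)) := by
    have h := hnn (l2/2) (by linarith)
    rw [hfact] at h
    by_contra hp
    push_neg at hp
    nlinarith [h, mul_pos (show (0:ℝ) < l2/2 - l1 by linarith)
      (show (0:ℝ) < l2/2 - l2 by linarith)]
  have hm3 : 0 ≤ a*(2*l1 - l2) + (b + a*(l1+l2)) := by
    have h := hnn (2*l1 - l2) (by linarith)
    rw [hfact] at h
    by_contra hp
    push_neg at hp
    nlinarith [h, mul_pos (show (0:ℝ) < l1 - (2*l1-l2) by linarith)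
      (show (0:ℝ) < l2 - (2*l1-l2) by linarith)]
  rcases ha.lt_or_gt with h | h
  · nlinarith [hm1, hm2]
  · nlinarith [hm1, hm3]

lemma cubic_contra (f : ℝ → ℝ) (a b c d l1 l2 : ℝ)
    (hf : ∀ t, f t = a*t^3 + b*t^2 + c*t + d)
    (ha : a ≠ 0) (h1 : l1 < 0) (h2 : l2 < 0) (hne : l1 ≠ l2)
    (hnn : ∀ t, t < 0 → 0 ≤ f t) (hr1 : f l1 = 0) (hr2 : f l2 = 0) : False := by
  rcases hne.lt_or_gt with h | h
  · exact cubic_contra_aux f a b c d l1 l2 hf ha h2 h hnn hr1 hr2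
  · exact cubic_contra_aux f a b c d l2 l1 hf ha h1 h hnn hr2 hr1

/-- If the projections of two solid ellipsoids in ℝ³ onto one of the
coordinate planes (x-y, x-z or y-z) are solid planar ellipses whose characteristic
polynomial `f(λ) = det(λ·A₁′ − A₂′)` has two distinct negative real roots, then the
three-dimensional ellipsoids are disjoint. -/
theorem ellipsoids_disjoint_of_projection_roots
    (M1 M2 : Matrix (Fin 3) (Fin 3) ℝ) (c1 c2 : Fin 3 → ℝ)
    (hM1symm : M1.IsSymm) (hM1 : M1.PosDef)
    (hM2symm : M2.IsSymm) (hM2 : M2.PosDef)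
    (π : (Fin 3 → ℝ) → (Fin 2 → ℝ))
    (hπ : π = (fun p => ![p 0, p 1]) ∨ π = (fun p => ![p 0, p 2]) ∨
          π = (fun p => ![p 1, p 2]))
    (M1' M2' : Matrix (Fin 2) (Fin 2) ℝ) (c1' c2' : Fin 2 → ℝ)
    (hM1'symm : M1'.IsSymm) (hM1' : M1'.PosDef)
    (hM2'symm : M2'.IsSymm) (hM2' : M2'.PosDef)
    (hproj1 : π '' solidEllipsoid M1 c1 = solidEllipse M1' c1')
    (hproj2 : π '' solidEllipsoid M2 c2 = solidEllipse M2' c2')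
    (hroots : ∃ l1 l2 : ℝ, l1 < 0 ∧ l2 < 0 ∧ l1 ≠ l2 ∧
      (l1 • ellipseHomMat M1' c1' - ellipseHomMat M2' c2').det = 0 ∧
      (l2 • ellipseHomMat M1' c1' - ellipseHomMat M2' c2').det = 0) :
    solidEllipsoid M1 c1 ∩ solidEllipsoid M2 c2 = ∅ := by
  obtain ⟨l1, l2, hl1, hl2, hlne, hd1, hd2⟩ := hroots
  rw [Set.eq_empty_iff_forall_notMem]
  rintro p ⟨hp1, hp2⟩
  have hq1 : π p ∈ solidEllipse M1' c1' := hproj1 ▸ Set.mem_image_of_mem π hp1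
  have hq2 : π p ∈ solidEllipse M2' c2' := hproj2 ▸ Set.mem_image_of_mem π hp2
  have s1 : M1' 1 0 = M1' 0 1 := by
    have := congrFun (congrFun hM1'symm 0) 1
    simpa [Matrix.transpose_apply] using this
  have s2 : M2' 1 0 = M2' 0 1 := by
    have := congrFun (congrFun hM2'symm 0) 1
    simpa [Matrix.transpose_apply] using this
  have ha11 : 0 < M1' 0 0 := by
    have := hM1'.dotProduct_mulVec_pos (x := ![1,0]) (by simp [funext_iff, Fin.forall_fin_two])
    simpa [dotProduct, Matrix.mulVec, Fin.sum_univ_two] using this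
  have hb11 : 0 < M2' 0 0 := by
    have := hM2'.dotProduct_mulVec_pos (x := ![1,0]) (by simp [funext_iff, Fin.forall_fin_two])
    simpa [dotProduct, Matrix.mulVec, Fin.sum_univ_two] using this
  have hdA : 0 < M1' 0 0 * M1' 1 1 - M1' 0 1 * M1' 0 1 := by
    have := hM1'.det_pos
    rw [Matrix.det_fin_two, s1] at this
    linarith
  have hdB : 0 < M2' 0 0 * M2' 1 1 - M2' 0 1 * M2' 0 1 := by
    have := hM2'.det_pos
    rw [Matrix.det_fin_two, s2] at this
    linarith
  have he1 : M1' 0 0*(π p 0 - c1' 0)^2 + 2*(M1' 0 1)*(π p 0 - c1' 0)*(π p 1 - c1' 1)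
      + M1' 1 1*(π p 1 - c1' 1)^2 ≤ 1 := by
    simp only [solidEllipse, Set.mem_setOf_eq, dotProduct, Matrix.mulVec,
      Fin.sum_univ_two, Pi.sub_apply] at hq1
    rw [s1] at hq1
    nlinarith [hq1]
  have he2 : M2' 0 0*(π p 0 - c2' 0)^2 + 2*(M2' 0 1)*(π p 0 - c2' 0)*(π p 1 - c2' 1)
      + M2' 1 1*(π p 1 - c2' 1)^2 ≤ 1 := by
    simp only [solidEllipse, Set.mem_setOf_eq, dotProduct, Matrix.mulVec,
      Fin.sum_univ_two, Pi.sub_apply] at hq2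
    rw [s2] at hq2
    nlinarith [hq2]
  set f : ℝ → ℝ := fun t => (t • ellipseHomMat M1' c1' - ellipseHomMat M2' c2').det with hfdef
  have hft : ∀ t : ℝ, f t = (t*(M1' 0 0)-(M2' 0 0))*(t*(M1' 1 1)-(M2' 1 1))*(t*((c1' 0)*((M1' 0 0)*(c1' 0)+(M1' 0 1)*(c1' 1))+(c1' 1)*((M1' 0 1)*(c1' 0)+(M1' 1 1)*(c1' 1))-1)-((c2' 0)*((M2' 0 0)*(c2' 0)+(M2' 0 1)*(c2' 1))+(c2' 1)*((M2' 0 1)*(c2' 0)+(M2' 1 1)*(c2' 1))-1)) + 2*(t*(M1' 0 1)-(M2' 0 1))*(t*((M1' 0 0)*(c1' 0)+(M1' 0 1)*(c1' 1))-((M2' 0 0)*(c2' 0)+(M2' 0 1)*(c2' 1)))*(t*((M1' 0 1)*(c1' 0)+(M1' 1 1)*(c1' 1))-((M2' 0 1)*(c2' 0)+(M2' 1 1)*(c2' 1))) - (t*(M1' 1 1)-(M2' 1 1))*(t*((M1' 0 0)*(c1' 0)+(M1' 0 1)*(c1' 1))-((M2' 0 0)*(c2' 0)+(M2' 0 1)*(c2'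 1)))^2 - (t*(M1' 0 0)-(M2' 0 0))*(t*((M1' 0 1)*(c1' 0)+(M1' 1 1)*(c1' 1))-((M2' 0 1)*(c2' 0)+(M2' 1 1)*(c2' 1)))^2 - (t*((c1' 0)*((M1' 0 0)*(c1' 0)+(M1' 0 1)*(c1' 1))+(c1' 1)*((M1' 0 1)*(c1' 0)+(M1' 1 1)*(c1' 1))-1)-((c2' 0)*((M2' 0 0)*(c2' 0)+(M2' 0 1)*(c2' 1))+(c2' 1)*((M2' 0 1)*(c2' 0)+(M2' 1 1)*(c2' 1))-1))*(t*(M1' 0 1)-(M2' 0 1))^2 := by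
    intro t
    show (t • ellipseHomMat M1' c1' - ellipseHomMat M2' c2').det = _
    simp only [Matrix.det_fin_three, Matrix.sub_apply, Matrix.smul_apply]
    simp only [ellipseHomMat, Matrix.det_fin_three, Matrix.sub_apply, Matrix.smul_apply,
      smul_eq_mul, Matrix.mulVec, Matrix.vecMul, dotProduct, Fin.sum_univ_two,
      Matrix.cons_val', Matrix.cons_val_zero, Matrix.cons_val_one, Matrix.head_cons,
      Matrix.empty_val', Matrix.cons_val_fin_one, Matrix.head_fin_const,
      Matrix.cons_val_two, Matrix.tail_cons, s1, s2]
    ring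
  have hnn : ∀ t : ℝ, t < 0 → 0 ≤ f t := by
    intro t ht
    rw [hft t]
    exact key_nonneg (M1' 0 0) (M1' 0 1) (M1' 1 1) (c1' 0) (c1' 1) (M2' 0 0) (M2' 0 1)
      (M2' 1 1) (c2' 0) (c2' 1) (π p 0) (π p 1) t ht ha11 hdA hb11 hdB he1 he2
  have haneg : -(M1' 0 0 * M1' 1 1 - M1' 0 1 * M1' 0 1) ≠ 0 := by
    have : -(M1' 0 0 * M1' 1 1 - M1' 0 1 * M1' 0 1) < 0 := by linarith
    exact ne_of_lt this
  refine cubic_contra f (-(M1' 0 0 * M1' 1 1 - M1' 0 1 * M1' 0 1))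
    ((f 1 + f (-1))/2 - f 0)
    ((f 1 - f (-1))/2 - (-(M1' 0 0 * M1' 1 1 - M1' 0 1 * M1' 0 1)))
    (f 0) l1 l2 ?_ haneg hl1 hl2 hlne hnn hd1 hd2
  intro t
  rw [hft t, hft 1, hft (-1), hft 0]
  ring
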